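/- arXiv:math/0201170 — 5 statements merged into one kernel-verified Lean document; each statement's English description precedes it below -/
import Mathlib

section
/- Let A be a complex unital Banach algebra, let u, η ∈ A and h ∈ ℂ, and assume the Lie superalgebra relation u * η - η * u = h • η. Define x := exp(u), θ := exp(u) * η, and q := exp(h). Then x * θ = q • (θ * x). -/
/-- From the Lie superalgebra relation `u η - η u = h η`, with `x = exp u`,
`θ = exp u * η`, `q = exp h`, we recover the quantum superplane relation
`x θ = q θ x`. -/
theorem quantum_superplane_relation_from_lie
    {A : Type*} [NormedRing A] [NormedAlgebra ℂ A] [CompleteSpace A]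
    (u η : A) (h : ℂ) (hrel : u * η - η * u = h • η) :
    (NormedSpace.exp u) * (NormedSpace.exp u * η) =
      Complex.exp h • ((NormedSpace.exp u * η) * NormedSpace.exp u) := by
  set v : A := u + h • (1 : A) with hv
  have hbase : u * η = η * v := by
    have h1 : u * η = h • η + η * u := eq_add_of_sub_eq hrel
    rw [h1, hv, mul_add, mul_smul_comm, mul_one, add_comm]
  have hpow : ∀ n : ℕ, u ^ n * η = η * v ^ n := by
    intro n
    induction n with
    | zero => simp
    | succ n ih =>
      rw [pow_succ', mul_assoc, ih, ← mul_assoc, hbase, mul_assoc, ← pow_succ']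
  have hkey : NormedSpace.exp u * η = η * NormedSpace.exp v := by
    have h1 := (NormedSpace.exp_series_hasSum_exp' (𝕂 := ℂ) u).mul_right η
    have h2 := (NormedSpace.exp_series_hasSum_exp' (𝕂 := ℂ) v).mul_left η
    refine h1.unique ?_
    convert h2 using 2 with n
    rw [smul_mul_assoc, hpow, mul_smul_comm]
  have hcomm : Commute (h • (1 : A)) u := by
    simpa using (Commute.one_left u).smul_left h
  have hev : NormedSpace.exp v = Complex.exp h • NormedSpace.exp u := by
    rw [hv, add_comm, NormedSpace.exp_add_of_commute_of_mem_ball (𝕂 := ℂ) hcomm (by simp [NormedSpace.expSeries_radius_eq_top]) (by simp [NormedSpace.expSeries_radius_eq_top])]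
    have : (h • (1 : A)) = algebraMap ℂ A h := by simp [Algebra.algebraMap_eq_smul_one]
    rw [this, ← NormedSpace.algebraMap_exp_comm, Complex.exp_eq_exp_ℂ,
      Algebra.algebraMap_eq_smul_one, smul_mul_assoc, one_mul]
  conv_lhs => rw [hkey, hev]
  simp [mul_smul_comm, mul_assoc]
end

section
/- Let A be a complex unital Banach algebra, let u, du ∈ A and h ∈ ℂ with h ≠ 0, and assume the first-order calculus relation u * du - du * u = (2h) • du. Define x := exp(u) and dx := ((exp(2h) - 1)/(2h)) • (du * exp(u)). Then x * dx = exp(2h) • (dx * x). -/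
open NormedSpace

lemma exp_mul_of_semiconj
    {A : Type*} [NormedRing A] [NormedAlgebra ℂ A] [CompleteSpace A]
    (a b c : A) (hab : a * b = b * c) :
    NormedSpace.exp a * b = b * NormedSpace.exp c := by
  have hpow : ∀ n : ℕ, a ^ n * b = b * c ^ n := by
    intro n
    induction n with
    | zero => simp
    | succ n ih =>
      rw [pow_succ', mul_assoc, ih, ← mul_assoc, hab, mul_assoc, ← pow_succ']
  simp only [exp_eq_tsum ℂ]
  have hsa := NormedSpace.expSeries_summable' (𝕂 := ℂ) a
  have hsc := NormedSpace.expSeries_summable' (𝕂 := ℂ) c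
  rw [← hsa.tsum_mul_right b, ← hsc.tsum_mul_left b]
  congr 1
  funext n
  rw [smul_mul_assoc, hpow n, mul_smul_comm]

/-- From the calculus relation `[u, du] = 2h du`, with `x = exp u` and
`dx = ((e^{2h} - 1)/(2h)) • (du * exp u)`, we recover `x dx = e^{2h} dx x`. -/
theorem x_dx_relation
    {A : Type*} [NormedRing A] [NormedAlgebra ℂ A] [CompleteSpace A]
    (u du : A) (h : ℂ) (hne : h ≠ 0)
    (hrel : u * du - du * u = (2 * h) • du) :
    (NormedSpace.exp u) *
        (((Complex.exp (2 * h) - 1) / (2 * h)) • (du * NormedSpace.exp u)) =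
      Complex.exp (2 * h) •
        ((((Complex.exp (2 * h) - 1) / (2 * h)) • (du * NormedSpace.exp u)) *
          NormedSpace.exp u) := by
  have hab : u * du = du * (u + (2 * h) • 1) := by
    rw [mul_add, mul_smul_comm, mul_one]
    linear_combination (norm := noncomm_ring) hrel
  have key : NormedSpace.exp u * du =
      Complex.exp (2 * h) • (du * NormedSpace.exp u) := by
    rw [exp_mul_of_semiconj u du (u + (2 * h) • 1) hab]
    have hcomm : Commute u ((2 * h) • 1) := by
      simp [Commute, SemiconjBy, mul_smul_comm, smul_mul_assoc]
    letI : NormedAlgebra ℚ A := NormedAlgebra.restrictScalars ℚ ℂ A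
    rw [NormedSpace.exp_add_of_commute hcomm]
    have h1 : (2 * h) • (1 : A) = algebraMap ℂ A (2 * h) := by
      simp [Algebra.algebraMap_eq_smul_one]
    rw [h1, ← NormedSpace.algebraMap_exp_comm, Complex.exp_eq_exp_ℂ]
    simp [Algebra.algebraMap_eq_smul_one, mul_smul_comm]
  calc NormedSpace.exp u *
        (((Complex.exp (2 * h) - 1) / (2 * h)) • (du * NormedSpace.exp u))
      = ((Complex.exp (2 * h) - 1) / (2 * h)) •
          ((NormedSpace.exp u * du) * NormedSpace.exp u) := by
        rw [mul_smul_comm, mul_assoc]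
    _ = Complex.exp (2 * h) •
        ((((Complex.exp (2 * h) - 1) / (2 * h)) • (du * NormedSpace.exp u)) *
          NormedSpace.exp u) := by
        rw [key, smul_mul_assoc, smul_mul_assoc, smul_smul, smul_smul, mul_comm]
end

section
/- Let A be a complex unital Banach algebra, let u, η, du ∈ A and h ∈ ℂ with h ≠ 0, and assume u * η - η * u = h • η, u * du - du * u = (2h) • du, and η * du = -(du * η). Define θ := exp(u) * η and dx := ((exp(2h) - 1)/(2h)) • (du * exp(u)). Then θ * dx = -exp(h) • (dx * θ). -/
open NormedSpace

lemma semiconj_exp' {A : Type*} [NormedRing A] [NormedAlgebra ℂ A] [CompleteSpace A]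
    (u a v : A) (H : u * a = a * v) :
    exp u * a = a * exp v := by
  have hpow : ∀ n : ℕ, u ^ n * a = a * v ^ n := by
    intro n
    induction n with
    | zero => simp
    | succ n ih =>
      rw [pow_succ, pow_succ, mul_assoc, H, ← mul_assoc, ih, mul_assoc]
  have h1 := NormedSpace.expSeries_summable' (𝕂 := ℂ) u
  have h2 := NormedSpace.expSeries_summable' (𝕂 := ℂ) v
  simp only [exp_eq_tsum (𝕂 := ℂ)]
  rw [← h1.tsum_mul_right a, ← h2.tsum_mul_left a]
  congr 1
  funext n
  rw [smul_mul_assoc, hpow, mul_smul_comm]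

/-- From `[u, η] = h η`, `[u, du] = 2h du`, `{η, du} = 0`, with `θ = exp u * η`
and `dx = ((e^{2h} - 1)/(2h)) • (du * exp u)`, we recover `θ dx = -e^h dx θ`. -/
theorem theta_dx_relation
    {A : Type*} [NormedRing A] [NormedAlgebra ℂ A] [CompleteSpace A]
    (u η du : A) (h : ℂ) (hne : h ≠ 0)
    (hη : u * η - η * u = h • η)
    (hdu : u * du - du * u = (2 * h) • du)
    (hanti : η * du = -(du * η)) :
    (NormedSpace.exp u * η) *
        (((Complex.exp (2 * h) - 1) / (2 * h)) • (du * NormedSpace.exp u)) =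
      -Complex.exp h •
        ((((Complex.exp (2 * h) - 1) / (2 * h)) • (du * NormedSpace.exp u)) *
          (NormedSpace.exp u * η)) := by
  set e := NormedSpace.exp u with he
  have key : ∀ (a : A) (c : ℂ), u * a = a * (u + c • 1) → e * a = Complex.exp c • (a * e) := by
    intro a c H
    have h1 := semiconj_exp' u a (u + c • 1) H
    rw [he, h1]
    have hc : Commute u (c • 1) := by
      simp [Commute, SemiconjBy, mul_smul_comm, smul_mul_assoc]
    rw [NormedSpace.exp_add_of_commute_of_mem_ball (𝕂 := ℂ) hc
      ((NormedSpace.expSeries_radius_eq_top ℂ A).symm ▸ edist_lt_top _ _)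
      ((NormedSpace.expSeries_radius_eq_top ℂ A).symm ▸ edist_lt_top _ _)]
    have h2 : NormedSpace.exp (c • (1 : A)) = Complex.exp c • 1 := by
      rw [← Algebra.algebraMap_eq_smul_one, ← Algebra.algebraMap_eq_smul_one,
        ← NormedSpace.algebraMap_exp_comm, Complex.exp_eq_exp_ℂ]
    rw [h2, mul_smul_comm, mul_one, mul_smul_comm]
  have hη' : e * η = Complex.exp h • (η * e) := by
    apply key
    rw [mul_add, mul_smul_comm, mul_one]
    exact sub_eq_iff_eq_add'.mp hη
  have hdu' : e * du = Complex.exp (2 * h) • (du * e) := by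
    apply key
    rw [mul_add, mul_smul_comm, mul_one]
    exact sub_eq_iff_eq_add'.mp hdu
  have ee : Complex.exp h * Complex.exp h = Complex.exp (2 * h) := by
    rw [← Complex.exp_add]; ring_nf
  have a1 : η * (du * e) = -(du * (η * e)) := by
    rw [← mul_assoc, hanti, neg_mul, mul_assoc]
  have a2 : ∀ x : A, e * (du * x) = Complex.exp (2 * h) • (du * (e * x)) := by
    intro x; rw [← mul_assoc, hdu', smul_mul_assoc, mul_assoc]
  have a3 : ∀ x : A, e * (η * x) = Complex.exp h • (η * (e * x)) := by
    intro x; rw [← mul_assoc, hη', smul_mul_assoc, mul_assoc]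
  have L : (e * η) * (du * e)
      = -((Complex.exp (2 * h) * Complex.exp h) • (du * (η * (e * e)))) := by
    rw [mul_assoc, a1, mul_neg, a2, a3, mul_smul_comm, smul_smul]
  have R : (du * e) * (e * η) = Complex.exp (2 * h) • (du * (η * (e * e))) := by
    rw [mul_assoc, hη', mul_smul_comm, a3, mul_smul_comm, mul_smul_comm, smul_smul, ee]
  have main : (e * η) * (du * e) = -Complex.exp h • ((du * e) * (e * η)) := by
    rw [L, R, smul_smul, ← neg_smul]
    congr 1
    ring
  rw [mul_smul_comm, main, smul_mul_assoc, smul_comm]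
end

section
/- Let A be a complex unital Banach algebra, let u, η, du, dη ∈ A and h ∈ ℂ with h ≠ 0, and assume u * η - η * u = h • η, u * du - du * u = (2h) • du, and u * dη - dη * u = h • dη. Define x := exp(u), θ := exp(u) * η, dx := ((exp(2h) - 1)/(2h)) • (du * exp(u)), and dθ := exp(u) * dη + dx * η. Then x * dθ = exp(h) • (dθ * x) + (exp(2h) - 1) • (dx * θ). -/
open NormedSpace in
theorem exp_weight_comm
    {A : Type*} [NormedRing A] [NormedAlgebra ℂ A] [CompleteSpace A]
    (u a : A) (c : ℂ) (hc : u * a - a * u = c • a) :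
    NormedSpace.exp u * a = Complex.exp c • (a * NormedSpace.exp u) := by
  have hua : u * a = a * (u + c • 1) := by
    rw [mul_add, mul_smul_comm, mul_one]
    exact (eq_add_of_sub_eq hc).trans (add_comm _ _)
  have hpow : ∀ n : ℕ, u ^ n * a = a * (u + c • 1) ^ n := by
    intro n
    induction n with
    | zero => simp
    | succ n ih =>
      rw [pow_succ', mul_assoc, ih, ← mul_assoc, hua, mul_assoc, ← pow_succ']
  have hsum1 := NormedSpace.expSeries_summable' (𝕂 := ℂ) u
  have hsum2 := NormedSpace.expSeries_summable' (𝕂 := ℂ) (u + c • 1)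
  have hmain : NormedSpace.exp u * a = a * NormedSpace.exp (u + c • 1) := by
    simp only [NormedSpace.exp_eq_tsum ℂ]
    rw [← hsum1.tsum_mul_right a, ← hsum2.tsum_mul_left a]
    congr 1
    funext n
    rw [smul_mul_assoc, hpow, mul_smul_comm]
  have hcomm : Commute u (c • (1 : A)) := (Commute.one_right u).smul_right c
  have hsplit : NormedSpace.exp (u + c • 1)
      = NormedSpace.exp u * (Complex.exp c • (1 : A)) := by
    rw [NormedSpace.exp_add_of_commute_of_mem_ball (𝕂 := ℂ) hcomm
      ((NormedSpace.expSeries_radius_eq_top ℂ A).symm ▸ edist_lt_top _ _)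
      ((NormedSpace.expSeries_radius_eq_top ℂ A).symm ▸ edist_lt_top _ _)]
    congr 1
    rw [← Algebra.algebraMap_eq_smul_one, ← map_exp_of_mem_ball (𝕂 := ℂ) (algebraMap ℂ A) (continuous_algebraMap ℂ A) c
        ((NormedSpace.expSeries_radius_eq_top ℂ ℂ).symm ▸ edist_lt_top _ _),
      ← Complex.exp_eq_exp_ℂ, Algebra.algebraMap_eq_smul_one]
  rw [hmain, hsplit, mul_smul_comm, mul_one, mul_smul_comm]

/-- From `[u, η] = h η`, `[u, du] = 2h du`, `[u, dη] = h dη`, with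
`x = exp u`, `θ = x η`, `dx = ((e^{2h}-1)/(2h)) • (du x)`, `dθ = x dη + dx η`,
we recover `x dθ = e^h dθ x + (e^{2h} - 1) dx θ`. -/
theorem x_dtheta_relation
    {A : Type*} [NormedRing A] [NormedAlgebra ℂ A] [CompleteSpace A]
    (u η du dη : A) (h : ℂ) (hne : h ≠ 0)
    (hη : u * η - η * u = h • η)
    (hdu : u * du - du * u = (2 * h) • du)
    (hdη : u * dη - dη * u = h • dη) :
    let x := NormedSpace.exp u
    let θ := NormedSpace.exp u * η
    let dx := ((Complex.exp (2 * h) - 1) / (2 * h)) • (du * NormedSpace.exp u)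
    let dθ := NormedSpace.exp u * dη + dx * η
    x * dθ = Complex.exp h • (dθ * x) + (Complex.exp (2 * h) - 1) • (dx * θ) := by
  intro x θ dx dθ
  have kη : x * η = Complex.exp h • (η * x) := exp_weight_comm u η h hη
  have kdη : x * dη = Complex.exp h • (dη * x) := exp_weight_comm u dη h hdη
  have kdu : x * du = Complex.exp (2 * h) • (du * x) := exp_weight_comm u du (2 * h) hdu
  set e : ℂ := Complex.exp h with he
  set e2 : ℂ := Complex.exp (2 * h) with he2
  set c : ℂ := (e2 - 1) / (2 * h) with hcdef
  show x * (x * dη + c • (du * x) * η)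
      = e • ((x * dη + c • (du * x) * η) * x) + (e2 - 1) • (c • (du * x) * (x * η))
  have h1 : x * (x * dη) = (e * e) • (dη * x * x) := by
    rw [kdη, mul_smul_comm, ← mul_assoc, kdη, smul_mul_assoc, smul_smul]
  have h2 : x * (c • (du * x) * η) = (c * (e2 * e)) • (du * x * (η * x)) := by
    rw [smul_mul_assoc, mul_smul_comm, ← mul_assoc, ← mul_assoc, kdu, smul_mul_assoc,
      smul_mul_assoc, mul_assoc (du * x) x η, kη, mul_smul_comm, smul_smul, smul_smul]
    ring_nf
  have h3 : (x * dη) * x = e • (dη * x * x) := by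
    rw [kdη, smul_mul_assoc]
  have h4 : (c • (du * x) * η) * x = c • (du * x * (η * x)) := by
    rw [smul_mul_assoc, smul_mul_assoc, mul_assoc]
  have h5 : c • (du * x) * (x * η) = (c * e) • (du * x * (η * x)) := by
    rw [smul_mul_assoc, kη, mul_smul_comm, smul_smul]
  rw [mul_add, add_mul, smul_add, h1, h2, h3, h4, h5]
  match_scalars <;> ring
end

section
/- Let A be a complex unital Banach algebra, let u, η, du, dη ∈ A and h ∈ ℂ with h ≠ 0, and assume u * η - η * u = h • η, η * η = 0, u * du - du * u = (2h) • du, u * dη - dη * u = h • dη, η * du = -(du * η), and η * dη = dη * η. Define θ := exp(u) * η, dx := ((exp(2h) - 1)/(2h)) • (du * exp(u)), and dθ := exp(u) * dη + dx * η. Then θ * dθ = dθ * θ. -/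
open NormedSpace in
lemma exp_semiconj_aux {A : Type*} [NormedRing A] [NormedAlgebra ℂ A] [CompleteSpace A]
    (u b : A) (c : ℂ) (hrel : u * b - b * u = c • b) :
    exp u * b = Complex.exp c • (b * exp u) := by
  have h1 : SemiconjBy b (u + c • (1 : A)) u := by
    have : u * b = b * u + c • b := by linear_combination (norm := noncomm_ring) hrel
    simp only [SemiconjBy, mul_add, mul_smul_comm, mul_one, this]
  have h2 : ∀ n : ℕ, b * (u + c • (1 : A)) ^ n = u ^ n * b := fun n => (h1.pow_right n)
  have hs1 : HasSum (fun n : ℕ => b * (((Nat.factorial n : ℂ)⁻¹) • (u + c • (1:A)) ^ n))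
      (b * exp (u + c • (1:A))) :=
    (exp_series_hasSum_exp' (u + c • (1:A))).mapL (ContinuousLinearMap.mul ℂ A b)
  have hs2 : HasSum (fun n : ℕ => (((Nat.factorial n : ℂ)⁻¹) • u ^ n) * b) (exp u * b) :=
    (exp_series_hasSum_exp' u).mapL ((ContinuousLinearMap.mul ℂ A).flip b)
  have heq : (fun n : ℕ => b * (((Nat.factorial n : ℂ)⁻¹) • (u + c • (1:A)) ^ n))
      = fun n : ℕ => (((Nat.factorial n : ℂ)⁻¹) • u ^ n) * b := by
    funext n
    rw [mul_smul_comm, smul_mul_assoc, h2]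
  rw [heq] at hs1
  have key : exp u * b = b * exp (u + c • (1:A)) := hs2.unique hs1
  let +nondep : NormedAlgebra ℚ A := .restrictScalars ℚ ℂ A
  rw [key, exp_add_of_commute (((Commute.one_left u).smul_left c).symm)]
  rw [show c • (1:A) = algebraMap ℂ A c by simp [Algebra.algebraMap_eq_smul_one],
    ← algebraMap_exp_comm, ← Complex.exp_eq_exp_ℂ, Algebra.algebraMap_eq_smul_one]
  rw [mul_smul_comm, mul_one, mul_smul_comm]


/-- From the Lie superalgebra relations `[u, η] = h η`, `η² = 0` and the
calculus relations `[u, du] = 2h du`, `[u, dη] = h dη`, `{η, du} = 0`,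
`[η, dη] = 0`, with `θ = exp u * η`, `dx = ((e^{2h}-1)/(2h)) • (du exp u)`,
`dθ = exp u * dη + dx η`, we recover `θ dθ = dθ θ`. -/
theorem theta_dtheta_relation
    {A : Type*} [NormedRing A] [NormedAlgebra ℂ A] [CompleteSpace A]
    (u η du dη : A) (h : ℂ) (hne : h ≠ 0)
    (hη : u * η - η * u = h • η)
    (hη2 : η * η = 0)
    (hdu : u * du - du * u = (2 * h) • du)
    (hdη : u * dη - dη * u = h • dη)
    (hanti : η * du = -(du * η))
    (hcomm : η * dη = dη * η) :
    let θ := NormedSpace.exp u * η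
    let dx := ((Complex.exp (2 * h) - 1) / (2 * h)) • (du * NormedSpace.exp u)
    let dθ := NormedSpace.exp u * dη + dx * η
    θ * dθ = dθ * θ := by
  intro θ dx dθ
  set E := NormedSpace.exp u with hE
  set k := Complex.exp h with hk
  have hk0 : k ≠ 0 := Complex.exp_ne_zero h
  have f1 : E * η = k • (η * E) := exp_semiconj_aux u η h hη
  have f2 : E * dη = k • (dη * E) := exp_semiconj_aux u dη h hdη
  -- η * E = k⁻¹ • (E * η)
  have f1' : η * E = k⁻¹ • (E * η) := by
    rw [f1, smul_smul, inv_mul_cancel₀ hk0, one_smul]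
  -- η * E * η = 0
  have g0 : η * (E * η) = 0 := by
    rw [f1, mul_smul_comm, ← mul_assoc, hη2, zero_mul, smul_zero]
  have hanti' : ∀ x : A, η * (du * x) = -(du * (η * x)) := by
    intro x; rw [← mul_assoc, hanti, neg_mul, mul_assoc]
  have hcomm' : ∀ x : A, η * (dη * x) = dη * (η * x) := by
    intro x; rw [← mul_assoc, hcomm, mul_assoc]
  show (E * η) * (E * dη + dx * η) = (E * dη + dx * η) * (E * η)
  have hdx : dx = ((Complex.exp (2*h) - 1)/(2*h)) • (du * E) := rfl
  rw [hdx]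
  simp only [mul_add, add_mul, smul_mul_assoc, mul_smul_comm, mul_assoc]
  -- T2: E * (η * (du * (E * η))) = 0 ; T4: du * (E * (η * (E * η))) = 0
  rw [hanti' (E * η), g0]
  simp only [mul_zero, neg_zero, smul_zero, add_zero]
  -- remains: E * (η * (E * dη)) = E * (dη * (E * η))
  rw [f2, mul_smul_comm, hcomm' E, f1']
  simp only [mul_smul_comm, smul_smul, mul_inv_cancel₀ hk0, one_smul]
end
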